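/- arXiv:2302.13511 — 5 statements merged into one kernel-verified Lean document; each statement's English description precedes it below -/
import Mathlib

section
/- Let P be a probability measure on a measurable space Ω, let g : Ω → ℝ be measurable, let M ≥ 2, and let f_1, …, f_M : Ω → ℝ be measurable functions such that g − f_ℓ is square-integrable with respect to P for every ℓ. Define the ensemble risk R_M = ∫ (g − (1/M) Σ_{ℓ=1}^M f_ℓ)² dP, the average 1-ensemble risk a_1 = (1/M) Σ_{ℓ=1}^M ∫ (g − f_ℓ)² dP, and the average 2-ensemble risk a_2 = (1/(M(M−1))) Σ_{i≠j, i,j∈[M]} ∫ (g − (f_i + f_j)/2)² dP. Then R_M = −(1 − 2/M) a_1 + 2(1 − 1/M) a_2. -/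
open Finset MeasureTheory

/-- Squared conditional risk decomposition: the risk of the `M`-ensemble is a linear
combination of the average `1`-ensemble risk and the average `2`-ensemble risk. -/
theorem ensemble_risk_decomposition
    {Ω : Type*} [MeasurableSpace Ω] (P : Measure Ω) [IsProbabilityMeasure P]
    (g : Ω → ℝ) (hg : Measurable g)
    (M : ℕ) (hM : 2 ≤ M)
    (f : Fin M → Ω → ℝ) (hf : ∀ ℓ, Measurable (f ℓ))
    (hL2 : ∀ ℓ, MemLp (fun ω => g ω - f ℓ ω) 2 P) :
    ∫ ω, (g ω - (1 / (M : ℝ)) * ∑ ℓ, f ℓ ω) ^ 2 ∂P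
      = -(1 - 2 / (M : ℝ)) *
          ((1 / (M : ℝ)) * ∑ ℓ, ∫ ω, (g ω - f ℓ ω) ^ 2 ∂P)
        + 2 * (1 - 1 / (M : ℝ)) *
          ((1 / ((M : ℝ) * ((M : ℝ) - 1))) *
            ∑ i, ∑ j ∈ Finset.univ.filter (fun j => j ≠ i),
              ∫ ω, (g ω - (f i ω + f j ω) / 2) ^ 2 ∂P) := by
  have hM2 : (2:ℝ) ≤ (M:ℝ) := by exact_mod_cast hM
  have hM0 : (M:ℝ) ≠ 0 := by linarith
  have hM1 : (M:ℝ) - 1 ≠ 0 := by linarith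
  set h : Fin M → Ω → ℝ := fun ℓ ω => g ω - f ℓ ω with hh
  have hI : ∀ i j, Integrable (fun ω => h i ω * h j ω) P := by
    intro i j
    have e : (fun ω => h i ω * h j ω)
        = fun ω => ((h i ω + h j ω) ^ 2 - h i ω ^ 2 - h j ω ^ 2) / 2 := by
      funext ω; ring
    rw [e]
    exact ((((hL2 i).add (hL2 j)).integrable_sq.sub (hL2 i).integrable_sq).sub
      (hL2 j).integrable_sq).div_const 2
  set I : Fin M → Fin M → ℝ := fun i j => ∫ ω, h i ω * h j ω ∂P with hIdef
  set S : ℝ := ∑ i, I i i with hS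
  set C : ℝ := ∑ i, ∑ j, I i j with hC
  -- single risks
  have hsingle : ∀ ℓ, (∫ ω, (g ω - f ℓ ω) ^ 2 ∂P) = I ℓ ℓ := by
    intro ℓ
    simp only [hIdef]
    congr 1
    funext ω
    simp only [hh]; ring
  -- pair risks
  have hpair : ∀ i j, (∫ ω, (g ω - (f i ω + f j ω) / 2) ^ 2 ∂P)
      = I i i / 4 + I i j / 2 + I j j / 4 := by
    intro i j
    have e : (fun ω => (g ω - (f i ω + f j ω) / 2) ^ 2)
        = fun ω => (h i ω * h i ω) / 4 + (h i ω * h j ω) / 2 + (h j ω * h j ω) / 4 := by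
      funext ω; simp only [hh]; ring
    have X : Integrable (fun ω => h i ω * h i ω / 4 + h i ω * h j ω / 2) P :=
      ((hI i i).div_const 4).add ((hI i j).div_const 2)
    rw [e, integral_add X ((hI j j).div_const 4),
      integral_add ((hI i i).div_const 4) ((hI i j).div_const 2),
      integral_div, integral_div, integral_div]
  -- LHS
  have hLHS : (∫ ω, (g ω - (1 / (M : ℝ)) * ∑ ℓ, f ℓ ω) ^ 2 ∂P)
      = (1 / (M:ℝ)^2) * C := by
    have e : (fun ω => (g ω - (1 / (M : ℝ)) * ∑ ℓ, f ℓ ω) ^ 2)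
        = fun ω => (1 / (M:ℝ)^2) * ∑ i, ∑ j, h i ω * h j ω := by
      funext ω
      have hsum : ∑ ℓ, h ℓ ω = (M:ℝ) * g ω - ∑ ℓ, f ℓ ω := by
        simp only [hh]
        rw [Finset.sum_sub_distrib, Finset.sum_const, Finset.card_univ,
          Fintype.card_fin, nsmul_eq_mul]
      have e1 : g ω - (1 / (M : ℝ)) * ∑ ℓ, f ℓ ω = (1/(M:ℝ)) * ∑ ℓ, h ℓ ω := by
        rw [hsum]; field_simp
      rw [e1, mul_pow, sq ((∑ ℓ, h ℓ ω)), Finset.sum_mul_sum]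
      ring
    rw [e, integral_const_mul]
    congr 1
    rw [integral_finset_sum _ fun i _ => integrable_finset_sum _ fun j _ => hI i j]
    exact Finset.sum_congr rfl fun i _ => integral_finset_sum _ fun j _ => hI i j
  -- pair sum
  have hps : ∑ i, ∑ j ∈ Finset.univ.filter (fun j => j ≠ i),
      (∫ ω, (g ω - (f i ω + f j ω) / 2) ^ 2 ∂P)
      = (((M:ℝ) - 2) * S + C) / 2 := by
    have step : ∀ i : Fin M, ∑ j ∈ Finset.univ.filter (fun j => j ≠ i),
        (∫ ω, (g ω - (f i ω + f j ω) / 2) ^ 2 ∂P)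
        = ((M:ℝ) * (I i i / 4) + (∑ j, I i j) / 2 + S / 4)
          - (I i i / 4 + I i i / 2 + I i i / 4) := by
      intro i
      calc ∑ j ∈ Finset.univ.filter (fun j => j ≠ i),
            (∫ ω, (g ω - (f i ω + f j ω) / 2) ^ 2 ∂P)
          = ∑ j ∈ Finset.univ.filter (fun j => j ≠ i),
            (I i i / 4 + I i j / 2 + I j j / 4) :=
            Finset.sum_congr rfl fun j _ => hpair i j
        _ = (∑ j : Fin M, (I i i / 4 + I i j / 2 + I j j / 4))
            - (I i i / 4 + I i i / 2 + I i i / 4) := by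
            rw [Finset.filter_ne', Finset.sum_erase_eq_sub (Finset.mem_univ i)]
        _ = ((M:ℝ) * (I i i / 4) + (∑ j, I i j) / 2 + S / 4)
            - (I i i / 4 + I i i / 2 + I i i / 4) := by
            congr 1
            rw [Finset.sum_add_distrib, Finset.sum_add_distrib, Finset.sum_const,
              Finset.card_univ, Fintype.card_fin, nsmul_eq_mul, ← Finset.sum_div,
              ← Finset.sum_div, ← hS]
    calc ∑ i, ∑ j ∈ Finset.univ.filter (fun j => j ≠ i),
          (∫ ω, (g ω - (f i ω + f j ω) / 2) ^ 2 ∂P)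
        = ∑ i : Fin M, (((M:ℝ) * (I i i / 4) + (∑ j, I i j) / 2 + S / 4)
            - (I i i / 4 + I i i / 2 + I i i / 4)) :=
          Finset.sum_congr rfl fun i _ => step i
      _ = (((M:ℝ) - 2) * S + C) / 2 := by
          simp only [Finset.sum_sub_distrib, Finset.sum_add_distrib, Finset.sum_const,
            Finset.card_univ, Fintype.card_fin, nsmul_eq_mul, ← Finset.sum_div,
            ← Finset.mul_sum, ← hS, ← hC]
          ring
  rw [hLHS, hps]
  have hsum1 : ∑ ℓ, (∫ ω, (g ω - f ℓ ω) ^ 2 ∂P) = S := by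
    rw [hS]; exact Finset.sum_congr rfl fun ℓ _ => hsingle ℓ
  rw [hsum1]
  field_simp
  ring
end

section
/- Let P be a probability measure on a measurable space Ω, let g : Ω → ℝ be measurable, let M ≥ 2, and let f_1, …, f_M : Ω → ℝ be measurable functions such that g − f_ℓ is square-integrable with respect to P for every ℓ. Define R_M = ∫ (g − (1/M) Σ_{ℓ=1}^M f_ℓ)² dP, a_1 = (1/M) Σ_{ℓ=1}^M ∫ (g − f_ℓ)² dP, and a_2 = (1/(M(M−1))) Σ_{i≠j} ∫ (g − (f_i + f_j)/2)² dP. Then a_2 ≤ a_1, and consequently 2 a_2 − a_1 ≤ R_M ≤ a_1. -/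
open Finset MeasureTheory

/-- Convexity sandwich for the ensemble risk: the average `2`-ensemble risk `a₂` is at
most the average `1`-ensemble risk `a₁`, and `2 a₂ - a₁ ≤ R_M ≤ a₁`. -/
theorem ensemble_risk_sandwich
    {Ω : Type*} [MeasurableSpace Ω] (P : Measure Ω) [IsProbabilityMeasure P]
    (g : Ω → ℝ) (hg : Measurable g)
    (M : ℕ) (hM : 2 ≤ M)
    (f : Fin M → Ω → ℝ) (hf : ∀ ℓ, Measurable (f ℓ))
    (hL2 : ∀ ℓ, MemLp (fun ω => g ω - f ℓ ω) 2 P) :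
    ((1 / ((M : ℝ) * ((M : ℝ) - 1))) *
        ∑ i, ∑ j ∈ Finset.univ.filter (fun j => j ≠ i),
          ∫ ω, (g ω - (f i ω + f j ω) / 2) ^ 2 ∂P)
      ≤ (1 / (M : ℝ)) * ∑ ℓ, ∫ ω, (g ω - f ℓ ω) ^ 2 ∂P
    ∧ 2 * ((1 / ((M : ℝ) * ((M : ℝ) - 1))) *
            ∑ i, ∑ j ∈ Finset.univ.filter (fun j => j ≠ i),
              ∫ ω, (g ω - (f i ω + f j ω) / 2) ^ 2 ∂P)
        - (1 / (M : ℝ)) * ∑ ℓ, ∫ ω, (g ω - f ℓ ω) ^ 2 ∂P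
      ≤ ∫ ω, (g ω - (1 / (M : ℝ)) * ∑ ℓ, f ℓ ω) ^ 2 ∂P
    ∧ ∫ ω, (g ω - (1 / (M : ℝ)) * ∑ ℓ, f ℓ ω) ^ 2 ∂P
      ≤ (1 / (M : ℝ)) * ∑ ℓ, ∫ ω, (g ω - f ℓ ω) ^ 2 ∂P := by
  have hM2 : (2:ℝ) ≤ (M:ℝ) := by exact_mod_cast hM
  have hM0 : (0:ℝ) < (M:ℝ) := by linarith
  have hM1 : (0:ℝ) < (M:ℝ) - 1 := by linarith
  set h : Fin M → Ω → ℝ := fun ℓ ω => g ω - f ℓ ω with hhdef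
  have hmul : ∀ i j, Integrable (fun ω => h i ω * h j ω) P := by
    intro i j
    have : (fun ω => h i ω * h j ω)
        = fun ω => ((h i ω + h j ω)^2 - h i ω^2 - h j ω^2)/2 := by
      funext ω; ring
    rw [this]
    exact ((((hL2 i).add (hL2 j)).integrable_sq.sub
      (hL2 i).integrable_sq).sub (hL2 j).integrable_sq).div_const 2
  set c : Fin M → Fin M → ℝ := fun i j => ∫ ω, h i ω * h j ω ∂P with hcdef
  have hintadd : ∀ i j, Integrable (fun ω => h i ω * h i ω + h j ω * h j ω) P :=
    fun i j => (hmul i i).add (hmul j j)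
  have hint2 : ∀ i j, Integrable (fun ω => 2*(h i ω * h j ω)) P :=
    fun i j => (hmul i j).const_mul 2
  have hcle : ∀ i j, 2 * c i j ≤ c i i + c j j := by
    intro i j
    have h0 : 0 ≤ ∫ ω, (h i ω * h i ω + h j ω * h j ω - 2*(h i ω * h j ω)) ∂P :=
      integral_nonneg fun ω => by
        show (0:ℝ) ≤ _
        nlinarith [sq_nonneg (h i ω - h j ω)]
    rw [integral_sub (hintadd i j) (hint2 i j),
      integral_add (hmul i i) (hmul j j), integral_const_mul] at h0
    simp only [hcdef]
    linarith
  -- expansions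
  have expand1 : ∀ ℓ, ∫ ω, (g ω - f ℓ ω) ^ 2 ∂P = c ℓ ℓ := by
    intro ℓ
    simp only [hcdef, hhdef]
    congr 1; funext ω; ring
  have expand2 : ∀ i j, ∫ ω, (g ω - (f i ω + f j ω) / 2) ^ 2 ∂P
      = (c i i + c j j + 2 * c i j) / 4 := by
    intro i j
    have hpt : (fun ω => (g ω - (f i ω + f j ω) / 2) ^ 2)
        = fun ω => (h i ω * h i ω + h j ω * h j ω + 2*(h i ω * h j ω))/4 := by
      funext ω; simp only [hhdef]; ring
    rw [hpt]
    rw [integral_div, integral_add (hintadd i j) (hint2 i j),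
      integral_add (hmul i i) (hmul j j), integral_const_mul]
  have expandM : ∫ ω, (g ω - (1 / (M : ℝ)) * ∑ ℓ, f ℓ ω) ^ 2 ∂P
      = (1/(M:ℝ)^2) * ∑ i, ∑ j, c i j := by
    have hpt : (fun ω => (g ω - (1 / (M : ℝ)) * ∑ ℓ, f ℓ ω) ^ 2)
        = fun ω => (1/(M:ℝ)^2) * ∑ i, ∑ j, h i ω * h j ω := by
      funext ω
      have hsum : ∑ ℓ, h ℓ ω = (M:ℝ) * g ω - ∑ ℓ, f ℓ ω := by
        simp only [hhdef, Finset.sum_sub_distrib, Finset.sum_const, Finset.card_univ,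
          Fintype.card_fin, nsmul_eq_mul]
      have h1 : g ω - (1 / (M : ℝ)) * ∑ ℓ, f ℓ ω = (1/(M:ℝ)) * ∑ ℓ, h ℓ ω := by
        rw [hsum]; field_simp
      have h2 : (∑ ℓ, h ℓ ω)^2 = ∑ i, ∑ j, h i ω * h j ω := by
        rw [sq, Finset.sum_mul_sum]
      rw [h1, mul_pow, h2, one_div, one_div, inv_pow]
    rw [hpt, integral_const_mul]
    congr 1
    rw [integral_finset_sum _ (fun i _ => integrable_finset_sum _ (fun j _ => hmul i j))]
    exact Finset.sum_congr rfl fun i _ =>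
      integral_finset_sum _ (fun j _ => hmul i j)
  -- finset algebra
  set T : ℝ := ∑ i, c i i with hTdef
  set S : ℝ := ∑ i, ∑ j, c i j with hSdef
  have hST : S ≤ (M:ℝ) * T := by
    have h2S : 2 * S ≤ ∑ i : Fin M, ∑ j : Fin M, (c i i + c j j) := by
      rw [hSdef, Finset.mul_sum]
      refine Finset.sum_le_sum fun i _ => ?_
      rw [Finset.mul_sum]
      exact Finset.sum_le_sum fun j _ => hcle i j
    have hrhs : ∑ i : Fin M, ∑ j : Fin M, (c i i + c j j) = 2 * ((M:ℝ) * T) := by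
      have hrow : ∀ i : Fin M, ∑ j : Fin M, (c i i + c j j) = (M:ℝ) * c i i + T := by
        intro i
        rw [Finset.sum_add_distrib, Finset.sum_const, Finset.card_univ, Fintype.card_fin,
          nsmul_eq_mul, ← hTdef]
      rw [Finset.sum_congr rfl fun i _ => hrow i, Finset.sum_add_distrib, ← Finset.mul_sum,
        Finset.sum_const, Finset.card_univ, Fintype.card_fin, nsmul_eq_mul, ← hTdef]
      ring
    linarith
  have hfilter : ∀ i : Fin M, Finset.univ.filter (fun j => j ≠ i) = Finset.univ.erase i := by
    intro i; ext j; simp [Finset.mem_erase, and_comm]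
  have hA2 : ∑ i, ∑ j ∈ Finset.univ.filter (fun j => j ≠ i),
      ∫ ω, (g ω - (f i ω + f j ω) / 2) ^ 2 ∂P = (((M:ℝ)-2)*T + S)/2 := by
    have step : ∀ i : Fin M, ∑ j ∈ Finset.univ.filter (fun j => j ≠ i),
        ∫ ω, (g ω - (f i ω + f j ω) / 2) ^ 2 ∂P
        = (((M:ℝ)-1) * c i i + (T - c i i) + 2*((∑ j, c i j) - c i i))/4 := by
      intro i
      rw [hfilter i]
      have e1 : ∑ j ∈ Finset.univ.erase i, c j j = T - c i i := by
        rw [hTdef, eq_sub_iff_add_eq, Finset.sum_erase_add _ _ (Finset.mem_univ i)]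
      have e2 : ∑ j ∈ Finset.univ.erase i, c i j = (∑ j, c i j) - c i i := by
        rw [eq_sub_iff_add_eq, Finset.sum_erase_add _ _ (Finset.mem_univ i)]
      have ecard : ((Finset.univ.erase i).card : ℝ) = (M:ℝ) - 1 := by
        rw [Finset.card_erase_of_mem (Finset.mem_univ i)]
        simp [Finset.card_univ]
        rw [Nat.cast_sub (by omega)]
        simp
      calc ∑ j ∈ Finset.univ.erase i, ∫ ω, (g ω - (f i ω + f j ω) / 2) ^ 2 ∂P
          = ∑ j ∈ Finset.univ.erase i, (c i i + c j j + 2 * c i j) / 4 := by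
            exact Finset.sum_congr rfl fun j _ => expand2 i j
        _ = (((M:ℝ)-1) * c i i + (T - c i i) + 2*((∑ j, c i j) - c i i))/4 := by
            rw [← Finset.sum_div]
            congr 1
            rw [Finset.sum_add_distrib, Finset.sum_add_distrib, Finset.sum_const,
              nsmul_eq_mul, ecard, ← Finset.mul_sum, e1, e2]
    rw [Finset.sum_congr rfl fun i _ => step i]
    simp only [Finset.sum_div, Finset.sum_add_distrib, Finset.sum_sub_distrib,
      Finset.sum_const, Finset.card_univ, Fintype.card_fin, nsmul_eq_mul,
      ← Finset.mul_sum, ← hTdef, ← hSdef, ← Finset.sum_div]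
    ring
  have hA1 : ∑ ℓ, ∫ ω, (g ω - f ℓ ω) ^ 2 ∂P = T := by
    rw [hTdef]; exact Finset.sum_congr rfl fun ℓ _ => expand1 ℓ
  rw [hA1, hA2, expandM]
  refine ⟨?_, ?_, ?_⟩
  · rw [← sub_nonneg]
    have : 1 / (M:ℝ) * T - 1 / ((M:ℝ) * ((M:ℝ) - 1)) * ((((M:ℝ)-2)*T + S)/2)
        = ((M:ℝ)*T - S) / (2*(M:ℝ)*((M:ℝ)-1)) := by
      field_simp; ring
    rw [this]
    exact div_nonneg (by linarith) (by positivity)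
  · rw [← sub_nonneg]
    have : (1/(M:ℝ)^2) * (S)
        - (2 * (1 / ((M:ℝ) * ((M:ℝ) - 1)) * ((((M:ℝ)-2)*T + S)/2)) - 1 / (M:ℝ) * T)
        = ((M:ℝ)*T - S) / ((M:ℝ)^2*((M:ℝ)-1)) := by
      field_simp; ring
    rw [this]
    exact div_nonneg (by linarith) (by positivity)
  · rw [← sub_nonneg]
    have : 1 / (M:ℝ) * T - (1/(M:ℝ)^2) * S = ((M:ℝ)*T - S) / (M:ℝ)^2 := by
      field_simp
    rw [this]
    exact div_nonneg (by linarith) (by positivity)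
end

section
/- Let P be a probability measure on a measurable space Ω, let g : Ω → ℝ be measurable, let M ≥ 2, and let f_1, …, f_M : Ω → ℝ be measurable functions such that g − f_ℓ is square-integrable with respect to P for every ℓ. Suppose there are real numbers 𝔯_1, 𝔯_2 and ε_1, ε_2 ≥ 0 such that |∫ (g − f_ℓ)² dP − 𝔯_1| ≤ ε_1 for every ℓ ∈ [M], and |∫ (g − (f_i + f_j)/2)² dP − 𝔯_2| ≤ ε_2 for all i ≠ j in [M]. Then the ensemble risk R_M = ∫ (g − (1/M) Σ_{ℓ=1}^M f_ℓ)² dP satisfies |R_M − ( −(1 − 2/M) 𝔯_1 + 2(1 − 1/M) 𝔯_2 )| ≤ ε_1 + 2 ε_2. -/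
open Finset MeasureTheory

private lemma memLp_two_integrable_mul {Ω : Type*} [MeasurableSpace Ω] {P : Measure Ω}
    {u v : Ω → ℝ} (hu : MemLp u 2 P) (hv : MemLp v 2 P) :
    Integrable (fun ω => u ω * v ω) P := by
  have h1 := hu.integrable_sq
  have h2 := hv.integrable_sq
  have h3 := (hu.add hv).integrable_sq
  have h4 : Integrable (fun ω => (1/2 : ℝ) * ((u ω + v ω) ^ 2 - u ω ^ 2 - v ω ^ 2)) P :=
    ((h3.sub h1).sub h2).const_mul _
  exact h4.congr (Filter.Eventually.of_forall fun ω => by ring)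

/-- Deterministic stability bound: if every `1`-ensemble risk is within `ε₁` of `𝔯₁`
and every `2`-ensemble risk is within `ε₂` of `𝔯₂`, then the `M`-ensemble risk is
within `ε₁ + 2 ε₂` of the extrapolated value `-(1 - 2/M) 𝔯₁ + 2 (1 - 1/M) 𝔯₂`. -/
theorem ensemble_risk_extrapolation_stability
    {Ω : Type*} [MeasurableSpace Ω] (P : Measure Ω) [IsProbabilityMeasure P]
    (g : Ω → ℝ) (hg : Measurable g)
    (M : ℕ) (hM : 2 ≤ M)
    (f : Fin M → Ω → ℝ) (hf : ∀ ℓ, Measurable (f ℓ))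
    (hL2 : ∀ ℓ, MemLp (fun ω => g ω - f ℓ ω) 2 P)
    (𝔯₁ 𝔯₂ ε₁ ε₂ : ℝ) (hε₁ : 0 ≤ ε₁) (hε₂ : 0 ≤ ε₂)
    (h1 : ∀ ℓ : Fin M, |(∫ ω, (g ω - f ℓ ω) ^ 2 ∂P) - 𝔯₁| ≤ ε₁)
    (h2 : ∀ i j : Fin M, i ≠ j →
      |(∫ ω, (g ω - (f i ω + f j ω) / 2) ^ 2 ∂P) - 𝔯₂| ≤ ε₂) :
    |(∫ ω, (g ω - (1 / (M : ℝ)) * ∑ ℓ, f ℓ ω) ^ 2 ∂P)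
        - (-(1 - 2 / (M : ℝ)) * 𝔯₁ + 2 * (1 - 1 / (M : ℝ)) * 𝔯₂)|
      ≤ ε₁ + 2 * ε₂ := by
  have hM2 : (2 : ℝ) ≤ (M : ℝ) := by exact_mod_cast hM
  have hM0 : (0 : ℝ) < (M : ℝ) := by linarith
  have hMne : (M : ℝ) ≠ 0 := ne_of_gt hM0
  set c : Fin M → Fin M → ℝ :=
    fun i j => ∫ ω, (g ω - f i ω) * (g ω - f j ω) ∂P with hc
  have hInt : ∀ i j : Fin M,
      Integrable (fun ω => (g ω - f i ω) * (g ω - f j ω)) P :=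
    fun i j => memLp_two_integrable_mul (hL2 i) (hL2 j)
  -- diagonal bound
  have hdiag : ∀ ℓ : Fin M, |c ℓ ℓ - 𝔯₁| ≤ ε₁ := by
    intro ℓ
    have := h1 ℓ
    simpa [hc, pow_two] using this
  -- off-diagonal bound
  have hoff : ∀ i j : Fin M, i ≠ j → |c i j - (2 * 𝔯₂ - 𝔯₁)| ≤ ε₁ + 2 * ε₂ := by
    intro i j hij
    have hb := h2 i j hij
    have hbval : (∫ ω, (g ω - (f i ω + f j ω) / 2) ^ 2 ∂P)
        = (c i i + 2 * c i j + c j j) / 4 := by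
      have hpt : ∀ ω, (g ω - (f i ω + f j ω) / 2) ^ 2
          = (1/4) * ((g ω - f i ω) * (g ω - f i ω))
            + ((1/2) * ((g ω - f i ω) * (g ω - f j ω))
            + (1/4) * ((g ω - f j ω) * (g ω - f j ω))) := fun ω => by ring
      have hIa : Integrable (fun ω => (1/4 : ℝ) * ((g ω - f i ω) * (g ω - f i ω))) P :=
        (hInt i i).const_mul _
      have hIb : Integrable (fun ω => (1/2 : ℝ) * ((g ω - f i ω) * (g ω - f j ω))) P :=
        (hInt i j).const_mul _
      have hIc : Integrable (fun ω => (1/4 : ℝ) * ((g ω - f j ω) * (g ω - f j ω))) P :=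
        (hInt j j).const_mul _
      have hIbc : Integrable (fun ω => (1/2 : ℝ) * ((g ω - f i ω) * (g ω - f j ω))
          + (1/4 : ℝ) * ((g ω - f j ω) * (g ω - f j ω))) P := hIb.add hIc
      simp_rw [hpt]
      rw [integral_add hIa hIbc, integral_add hIb hIc,
        integral_const_mul, integral_const_mul, integral_const_mul]
      simp only [hc]
      ring
    rw [hbval] at hb
    have hai := abs_le.mp (hdiag i)
    have haj := abs_le.mp (hdiag j)
    have hb' := abs_le.mp hb
    rw [abs_le]
    constructor <;> [nlinarith; nlinarith]
  -- rewrite the ensemble risk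
  have hR : (∫ ω, (g ω - (1 / (M : ℝ)) * ∑ ℓ, f ℓ ω) ^ 2 ∂P)
      = (1 / (M : ℝ)) ^ 2 * ∑ i, ∑ j, c i j := by
    have hpt : ∀ ω, (g ω - (1 / (M : ℝ)) * ∑ ℓ, f ℓ ω) ^ 2
        = (1 / (M : ℝ)) ^ 2 * ∑ i, ∑ j, (g ω - f i ω) * (g ω - f j ω) := by
      intro ω
      have hs : ∑ i, ∑ j, (g ω - f i ω) * (g ω - f j ω)
          = (∑ i, (g ω - f i ω)) * (∑ j, (g ω - f j ω)) :=
        (Finset.sum_mul_sum _ _ _ _).symm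
      have hsum : ∑ i, (g ω - f i ω) = (M : ℝ) * g ω - ∑ ℓ, f ℓ ω := by
        rw [Finset.sum_sub_distrib, Finset.sum_const, card_univ, Fintype.card_fin,
          nsmul_eq_mul]
      rw [hs, hsum]
      field_simp
    simp_rw [hpt]
    rw [integral_const_mul,
      integral_finset_sum _ (fun i _ => integrable_finset_sum _ (fun j _ => hInt i j))]
    congr 1
    exact Finset.sum_congr rfl fun i _ => integral_finset_sum _ (fun j _ => hInt i j)
  -- target double sum
  set t : Fin M → Fin M → ℝ := fun i j => if i = j then 𝔯₁ else 2 * 𝔯₂ - 𝔯₁ with ht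
  have hrow : ∀ i : Fin M, ∑ j, t i j = (M : ℝ) * (2 * 𝔯₂ - 𝔯₁) + (2 * 𝔯₁ - 2 * 𝔯₂) := by
    intro i
    have : ∀ j : Fin M, t i j = (2 * 𝔯₂ - 𝔯₁) + (if i = j then 2 * 𝔯₁ - 2 * 𝔯₂ else 0) := by
      intro j; by_cases h : i = j <;> simp [ht, h] <;> ring
    rw [Finset.sum_congr rfl fun j _ => this j, Finset.sum_add_distrib,
      Finset.sum_const, Finset.sum_ite_eq, card_univ, Fintype.card_fin, nsmul_eq_mul]
    simp
  have htsum : ∑ i, ∑ j, t i j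
      = (M : ℝ) ^ 2 * (-(1 - 2 / (M : ℝ)) * 𝔯₁ + 2 * (1 - 1 / (M : ℝ)) * 𝔯₂) := by
    rw [Finset.sum_congr rfl fun i _ => hrow i, Finset.sum_const, card_univ,
      Fintype.card_fin, nsmul_eq_mul]
    field_simp
    ring
  -- bound on the difference of double sums
  have hdiff : |(∑ i, ∑ j, c i j) - ∑ i, ∑ j, t i j|
      ≤ (M : ℝ) ^ 2 * (ε₁ + 2 * ε₂) := by
    have h1' : |(∑ i, ∑ j, c i j) - ∑ i, ∑ j, t i j|
        ≤ ∑ i, ∑ j : Fin M, (if i = j then ε₁ else ε₁ + 2 * ε₂) := by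
      rw [← Finset.sum_sub_distrib]
      refine (Finset.abs_sum_le_sum_abs _ _).trans (Finset.sum_le_sum fun i _ => ?_)
      rw [← Finset.sum_sub_distrib]
      refine (Finset.abs_sum_le_sum_abs _ _).trans (Finset.sum_le_sum fun j _ => ?_)
      by_cases h : i = j
      · subst h; simpa [ht] using hdiag i
      · simpa [ht, h] using hoff i j h
    refine h1'.trans ?_
    have hrow' : ∀ i : Fin M, ∑ j : Fin M, (if i = j then ε₁ else ε₁ + 2 * ε₂)
        = (M : ℝ) * (ε₁ + 2 * ε₂) + (ε₁ - (ε₁ + 2 * ε₂)) := by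
      intro i
      have : ∀ j : Fin M, (if i = j then ε₁ else ε₁ + 2 * ε₂)
          = (ε₁ + 2 * ε₂) + (if i = j then ε₁ - (ε₁ + 2 * ε₂) else 0) := by
        intro j; by_cases h : i = j <;> simp [h]
      rw [Finset.sum_congr rfl fun j _ => this j, Finset.sum_add_distrib,
        Finset.sum_const, Finset.sum_ite_eq, card_univ, Fintype.card_fin, nsmul_eq_mul]
      simp
    rw [Finset.sum_congr rfl fun i _ => hrow' i, Finset.sum_const, card_univ,
      Fintype.card_fin, nsmul_eq_mul]
    nlinarith
  -- conclude
  rw [hR]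
  have hkey : (1 / (M : ℝ)) ^ 2 * (∑ i, ∑ j, c i j)
      - (-(1 - 2 / (M : ℝ)) * 𝔯₁ + 2 * (1 - 1 / (M : ℝ)) * 𝔯₂)
      = (1 / (M : ℝ)) ^ 2 * ((∑ i, ∑ j, c i j) - ∑ i, ∑ j, t i j) := by
    rw [htsum]
    field_simp
  rw [hkey, abs_mul, abs_of_pos (by positivity : (0:ℝ) < (1 / (M : ℝ)) ^ 2)]
  calc (1 / (M : ℝ)) ^ 2 * |(∑ i, ∑ j, c i j) - ∑ i, ∑ j, t i j|
      ≤ (1 / (M : ℝ)) ^ 2 * ((M : ℝ) ^ 2 * (ε₁ + 2 * ε₂)) := by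
        exact mul_le_mul_of_nonneg_left hdiff (by positivity)
    _ = ε₁ + 2 * ε₂ := by field_simp
end

section
/- Let (Z_ℓ)_{ℓ≥1} be independent and identically distributed random variables with values in a measurable space E on a probability space, and let h : E × E → ℝ be a measurable function such that h(Z_1, Z_2) is integrable. For M ≥ 2 define the order-2 U-statistic U_M = (1/(M(M−1))) Σ_{i≠j, i,j∈[M]} h(Z_i, Z_j), where the sum ranges over all ordered pairs (i,j) with i ≠ j. Then for every δ > 0, ℙ( sup_{M ≥ 2} |U_M| ≥ δ ) ≤ E|h(Z_1, Z_2)| / δ. -/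
open Finset MeasureTheory ProbabilityTheory
open scoped ENNReal
open Fin.NatCast

section Aux

private lemma double_to_pairs {M : Type*} [AddCommMonoid M] (m : ℕ) (G : ℕ → ℕ → M) :
    ∑ i ∈ Finset.range m, ∑ j ∈ (Finset.range m).filter (fun j => j ≠ i), G i j
      = ∑ p ∈ ((Finset.range m) ×ˢ (Finset.range m)).filter (fun p => p.2 ≠ p.1), G p.1 p.2 := by
  calc ∑ i ∈ Finset.range m, ∑ j ∈ (Finset.range m).filter (fun j => j ≠ i), G i j
      = ∑ i ∈ Finset.range m, ∑ j ∈ Finset.range m, if j ≠ i then G i j else 0 := by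
        exact Finset.sum_congr rfl fun i _ => Finset.sum_filter _ _
    _ = ∑ p ∈ (Finset.range m) ×ˢ (Finset.range m), if p.2 ≠ p.1 then G p.1 p.2 else 0 := by
        rw [Finset.sum_product]
    _ = _ := (Finset.sum_filter _ _).symm

private lemma pair_sum_perm {α : Type*} [AddCommMonoid α] {n m : ℕ} [NeZero n] (hm : m ≤ n)
    (e : Equiv.Perm (Fin n)) (he : ∀ x : Fin n, m ≤ x.val → e x = x) (F : Fin n → Fin n → α) :
    ∑ i ∈ Finset.range m, ∑ j ∈ (Finset.range m).filter (fun j => j ≠ i),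
        F (e (i : Fin n)) (e (j : Fin n))
      = ∑ i ∈ Finset.range m, ∑ j ∈ (Finset.range m).filter (fun j => j ≠ i),
        F (i : Fin n) (j : Fin n) := by
  have he' : ∀ x : Fin n, m ≤ x.val → e.symm x = x := by
    intro x hx
    have h1 : e x = x := he x hx
    conv_lhs => rw [← h1]
    exact Equiv.symm_apply_apply e x
  have hlt : ∀ x : Fin n, x.val < m → (e x).val < m := by
    intro x hx
    by_contra hge
    push_neg at hge
    have h1 : e (e x) = e x := he _ hge
    have h2 : e x = x := e.injective h1
    rw [h2] at hge
    omega
  have hlt' : ∀ x : Fin n, x.val < m → (e.symm x).val < m := by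
    intro x hx
    by_contra hge
    push_neg at hge
    have h1 : e.symm (e.symm x) = e.symm x := he' _ hge
    have h2 : e.symm x = x := e.symm.injective h1
    rw [h2] at hge
    omega
  rw [double_to_pairs, double_to_pairs]
  refine Finset.sum_nbij' (fun p => ((e (p.1 : Fin n)).val, (e (p.2 : Fin n)).val))
    (fun p => ((e.symm (p.1 : Fin n)).val, (e.symm (p.2 : Fin n)).val)) ?_ ?_ ?_ ?_ ?_
  · rintro ⟨a, b⟩ hp
    simp only [Finset.mem_filter, Finset.mem_product, Finset.mem_range] at hp ⊢
    obtain ⟨⟨ha, hb⟩, hab⟩ := hp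
    have hva : ((a : Fin n)).val = a := Fin.val_cast_of_lt (lt_of_lt_of_le ha hm)
    have hvb : ((b : Fin n)).val = b := Fin.val_cast_of_lt (lt_of_lt_of_le hb hm)
    refine ⟨⟨hlt _ (by rw [hva]; exact ha), hlt _ (by rw [hvb]; exact hb)⟩, ?_⟩
    intro hEq
    apply hab
    have : e (b : Fin n) = e (a : Fin n) := Fin.val_injective hEq
    have := e.injective this
    rw [← hva, ← hvb, this]
  · rintro ⟨a, b⟩ hp
    simp only [Finset.mem_filter, Finset.mem_product, Finset.mem_range] at hp ⊢
    obtain ⟨⟨ha, hb⟩, hab⟩ := hp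
    have hva : ((a : Fin n)).val = a := Fin.val_cast_of_lt (lt_of_lt_of_le ha hm)
    have hvb : ((b : Fin n)).val = b := Fin.val_cast_of_lt (lt_of_lt_of_le hb hm)
    refine ⟨⟨hlt' _ (by rw [hva]; exact ha), hlt' _ (by rw [hvb]; exact hb)⟩, ?_⟩
    intro hEq
    apply hab
    have : e.symm (b : Fin n) = e.symm (a : Fin n) := Fin.val_injective hEq
    have := e.symm.injective this
    rw [← hva, ← hvb, this]
  · rintro ⟨a, b⟩ hp
    simp only [Finset.mem_filter, Finset.mem_product, Finset.mem_range] at hp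
    obtain ⟨⟨ha, hb⟩, hab⟩ := hp
    have hva : ((a : Fin n)).val = a := Fin.val_cast_of_lt (lt_of_lt_of_le ha hm)
    have hvb : ((b : Fin n)).val = b := Fin.val_cast_of_lt (lt_of_lt_of_le hb hm)
    simp only [Fin.cast_val_eq_self, Equiv.symm_apply_apply, Prod.mk.injEq]
    exact ⟨hva, hvb⟩
  · rintro ⟨a, b⟩ hp
    simp only [Finset.mem_filter, Finset.mem_product, Finset.mem_range] at hp
    obtain ⟨⟨ha, hb⟩, hab⟩ := hp
    have hva : ((a : Fin n)).val = a := Fin.val_cast_of_lt (lt_of_lt_of_le ha hm)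
    have hvb : ((b : Fin n)).val = b := Fin.val_cast_of_lt (lt_of_lt_of_le hb hm)
    simp only [Fin.cast_val_eq_self, Equiv.apply_symm_apply, Prod.mk.injEq]
    exact ⟨hva, hvb⟩
  · rintro ⟨a, b⟩ hp
    show F _ _ = F ((((e (a : Fin n)).val : ℕ) : Fin n)) ((((e (b : Fin n)).val : ℕ) : Fin n))
    rw [Fin.cast_val_eq_self, Fin.cast_val_eq_self]

private lemma exists_good_perm {n : ℕ} [NeZero n] {k i j : ℕ} (hk : k + 2 ≤ n)
    (hi : i < k + 2) (hj : j < k + 2) (hij : j ≠ i) :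
    ∃ e : Equiv.Perm (Fin n), e ((0 : ℕ) : Fin n) = (i : Fin n) ∧
      e ((1 : ℕ) : Fin n) = (j : Fin n) ∧ ∀ x : Fin n, k + 2 ≤ x.val → e x = x := by
  have h0n : 0 < n := by omega
  have h1n : 1 < n := by omega
  set z : Fin n := ((0 : ℕ) : Fin n) with hz
  set o : Fin n := ((1 : ℕ) : Fin n) with ho
  set a : Fin n := (i : Fin n) with ha
  set b : Fin n := (j : Fin n) with hb
  have hzv : z.val = 0 := Fin.val_cast_of_lt h0n
  have hov : o.val = 1 := Fin.val_cast_of_lt h1n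
  have hav : a.val = i := Fin.val_cast_of_lt (lt_of_lt_of_le hi hk)
  have hbv : b.val = j := Fin.val_cast_of_lt (lt_of_lt_of_le hj hk)
  have hzo : z ≠ o := by intro hEq; rw [Fin.ext_iff, hzv, hov] at hEq; omega
  have hba : b ≠ a := by intro hEq; rw [Fin.ext_iff, hbv, hav] at hEq; exact hij hEq
  set s1 : Equiv.Perm (Fin n) := Equiv.swap z a with hs1
  set t : Fin n := s1 b with ht
  have hs1t : s1 t = b := by rw [ht]; exact Equiv.swap_apply_self _ _ _
  have htv : t.val < k + 2 := by
    rcases eq_or_ne b z with h1 | h1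
    · have h2 : t = a := by rw [ht, h1, hs1, Equiv.swap_apply_left]
      rw [h2, hav]; exact hi
    rcases eq_or_ne b a with h2 | h2
    · have h3 : t = z := by rw [ht, h2, hs1, Equiv.swap_apply_right]
      rw [h3, hzv]; omega
    · have h3 : t = b := by rw [ht, hs1, Equiv.swap_apply_of_ne_of_ne h1 h2]
      rw [h3, hbv]; exact hj
  set s2 : Equiv.Perm (Fin n) := Equiv.swap o t with hs2
  refine ⟨s2.trans s1, ?_, ?_, ?_⟩
  · have hzt : z ≠ t := by
      intro hEq
      have : s1 z = b := by rw [hEq]; exact hs1t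
      rw [hs1, Equiv.swap_apply_left] at this
      exact hba this.symm
    have : s2 z = z := Equiv.swap_apply_of_ne_of_ne hzo hzt
    show s1 (s2 z) = a
    rw [this, hs1, Equiv.swap_apply_left]
  · show s1 (s2 o) = b
    rw [hs2]
    rw [Equiv.swap_apply_left]
    exact hs1t
  · intro x hx
    have hxo : x ≠ o := by intro hEq; rw [hEq, hov] at hx; omega
    have hxt : x ≠ t := by intro hEq; rw [hEq] at hx; omega
    have hxz : x ≠ z := by intro hEq; rw [hEq, hzv] at hx; omega
    have hxa : x ≠ a := by
      intro hEq; rw [hEq, hav] at hx; omega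
    show s1 (s2 x) = x
    rw [hs2, Equiv.swap_apply_of_ne_of_ne hxo hxt, hs1,
      Equiv.swap_apply_of_ne_of_ne hxz hxa]

end Aux

private theorem U_stat_aux
    {Ω E : Type*} [MeasurableSpace Ω] [MeasurableSpace E]
    (P : Measure Ω) [IsProbabilityMeasure P]
    (Z : ℕ → Ω → E) (hmeas : ∀ i, Measurable (Z i))
    (hindep : iIndepFun Z P)
    (hident : ∀ i, IdentDistrib (Z i) (Z 0) P P)
    (h : E × E → ℝ) (hh : Measurable h)
    (hint : Integrable (fun ω => h (Z 0 ω, Z 1 ω)) P)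
    (c : ℝ) (hc : 0 < c) (N : ℕ) :
    P (⋃ k ∈ Finset.range (N + 1), {ω | c ≤
        |(1 / (((k : ℝ) + 2) * ((k : ℝ) + 1))) *
          ∑ i ∈ Finset.range (k + 2),
            ∑ j ∈ (Finset.range (k + 2)).filter (fun j => j ≠ i),
              h (Z i ω, Z j ω)|})
      ≤ ENNReal.ofReal ((∫ ω, |h (Z 0 ω, Z 1 ω)| ∂P) / c) := by
  classical
  haveI hNZ : NeZero (N + 2) := ⟨by omega⟩
  set μ : Measure E := P.map (Z 0) with hmu
  haveI : IsProbabilityMeasure μ := Measure.isProbabilityMeasure_map (hmeas 0).aemeasurable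
  set ν : Measure (Fin (N + 2) → E) := Measure.pi (fun _ => μ) with hnu
  set W : Ω → (Fin (N + 2) → E) := (fun ω i => Z (i : ℕ) ω) with hWdef
  have hWm : Measurable W := measurable_pi_lambda _ fun i => hmeas _
  have hmapZ : ∀ i (s : Set E), MeasurableSet s → P (Z i ⁻¹' s) = μ s := by
    intro i s hs
    rw [hmu, ← (hident i).map_eq, Measure.map_apply (hmeas i) hs]
  have hW : P.map W = ν := by
    rw [hnu]
    refine (Measure.pi_eq fun s hs => ?_).symm
    rw [Measure.map_apply hWm (MeasurableSet.univ_pi hs)]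
    set s' : ℕ → Set E := fun i => if hlt : i < N + 2 then s ⟨i, hlt⟩ else Set.univ with hs'
    have hs'm : ∀ i, MeasurableSet (s' i) := by
      intro i; rw [hs']; dsimp only; split
      · exact hs _
      · exact MeasurableSet.univ
    have hpre : W ⁻¹' Set.pi Set.univ s = ⋂ i ∈ Finset.range (N + 2), Z i ⁻¹' s' i := by
      ext ω
      simp only [Set.mem_preimage, Set.mem_pi, Set.mem_univ, forall_true_left, Set.mem_iInter,
        Finset.mem_range]
      constructor
      · intro hx i hi
        rw [hs']; dsimp only; rw [dif_pos hi]
        exact hx ⟨i, hi⟩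
      · intro hx i
        have h2 := hx i.val i.isLt
        rw [hs'] at h2; dsimp only at h2; rw [dif_pos i.isLt] at h2
        simpa using h2
    rw [hpre, hindep.measure_inter_preimage_eq_mul (Finset.range (N + 2)) (fun i _ => hs'm i)]
    rw [← Fin.prod_univ_eq_prod_range (fun i => P (Z i ⁻¹' s' i)) (N + 2)]
    refine Finset.prod_congr rfl fun i _ => ?_
    rw [hmapZ _ _ (hs'm i.val)]
    congr 1
    rw [hs']; dsimp only; rw [dif_pos i.isLt]
  set q : ℕ → (Fin (N + 2) → E) → ℝ := fun M x =>
    (1 / (((M : ℝ) + 2) * ((M : ℝ) + 1))) *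
      ∑ i ∈ Finset.range (M + 2), ∑ j ∈ (Finset.range (M + 2)).filter (fun j => j ≠ i),
        h (x (i : Fin (N + 2)), x (j : Fin (N + 2))) with hq
  have hqm : ∀ M, Measurable (q M) := by
    intro M
    rw [hq]; dsimp only
    apply Measurable.const_mul
    apply Finset.measurable_sum
    intro i _
    apply Finset.measurable_sum
    intro j _
    exact hh.comp ((measurable_pi_apply _).prodMk (measurable_pi_apply _))
  have hqW : ∀ k, k ≤ N → ∀ ω, q k (W ω) =
      (1 / (((k : ℝ) + 2) * ((k : ℝ) + 1))) *
        ∑ i ∈ Finset.range (k + 2), ∑ j ∈ (Finset.range (k + 2)).filter (fun j => j ≠ i),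
          h (Z i ω, Z j ω) := by
    intro k hk ω
    rw [hq]; dsimp only
    congr 1
    refine Finset.sum_congr rfl fun i hi => Finset.sum_congr rfl fun j hj => ?_
    rw [Finset.mem_range] at hi
    rw [Finset.mem_filter, Finset.mem_range] at hj
    have hi2 : i < N + 2 := by omega
    have hj2 : j < N + 2 := by omega
    show h (Z ((i : Fin (N + 2)) : ℕ) ω, Z ((j : Fin (N + 2)) : ℕ) ω) = _
    rw [Fin.val_cast_of_lt hi2, Fin.val_cast_of_lt hj2]
  set B : ℕ → Set (Fin (N + 2) → E) := fun k =>
    {x | c ≤ |q k x|} ∩ ⋂ l ∈ Set.Ioc k N, {x | |q l x| < c} with hB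
  have hBmem : ∀ k x, x ∈ B k ↔ (c ≤ |q k x| ∧ ∀ l, k < l → l ≤ N → |q l x| < c) := by
    intro k x
    rw [hB]
    simp only [Set.mem_inter_iff, Set.mem_setOf_eq, Set.mem_iInter, Set.mem_Ioc]
    constructor
    · rintro ⟨h1, h2⟩; exact ⟨h1, fun l hl1 hl2 => h2 l ⟨hl1, hl2⟩⟩
    · rintro ⟨h1, h2⟩; exact ⟨h1, fun l hl => h2 l hl.1 hl.2⟩
  have hBm : ∀ k, MeasurableSet (B k) := by
    intro k
    rw [hB]
    refine (measurableSet_le measurable_const (hqm k).abs).inter ?_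
    refine MeasurableSet.biInter (Set.to_countable _) fun l _ => ?_
    exact measurableSet_lt (hqm l).abs measurable_const
  set A : ℕ → Set Ω := fun k => W ⁻¹' B k with hA
  have hAmem : ∀ k ω, ω ∈ A k ↔ W ω ∈ B k := fun k ω => Iff.rfl
  have hAm : ∀ k, MeasurableSet (A k) := fun k => hWm (hBm k)
  have hqinv : ∀ (e : Equiv.Perm (Fin (N + 2))) (k l : ℕ),
      (∀ x : Fin (N + 2), k + 2 ≤ x.val → e x = x) → k ≤ l → l ≤ N →
      ∀ x, q l (fun i => x (e i)) = q l x := by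
    intro e k l he hkl hlN x
    rw [hq]; dsimp only
    congr 1
    exact pair_sum_perm (by omega) e (fun y hy => he y (by omega)) (fun a b => h (x a, x b))
  -- the key per-k estimate
  have hkey : ∀ k, k ≤ N →
      ENNReal.ofReal c * P (A k) ≤ ∫⁻ ω in A k, ENNReal.ofReal |h (Z 0 ω, Z 1 ω)| ∂P := by
    intro k hk
    have hdpos : (0 : ℝ) < ((k : ℝ) + 2) * ((k : ℝ) + 1) := by positivity
    have hmeas_ij : ∀ i j : ℕ, Measurable fun ω => ENNReal.ofReal |h (Z i ω, Z j ω)| :=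
      fun i j => (hh.comp ((hmeas i).prodMk (hmeas j))).abs.ennreal_ofReal
    have hf1 : Measurable fun ω => ENNReal.ofReal |q k (W ω)| :=
      ((hqm k).comp hWm).abs.ennreal_ofReal
    have step1 : ENNReal.ofReal c * P (A k) ≤ ∫⁻ ω in A k, ENNReal.ofReal |q k (W ω)| ∂P := by
      rw [← setLIntegral_const (A k) (ENNReal.ofReal c)]
      refine setLIntegral_mono hf1 ?_
      intro ω hω
      exact ENNReal.ofReal_le_ofReal (((hBmem k (W ω)).mp hω).1)
    have ptwiseW : ∀ ω, ENNReal.ofReal |q k (W ω)| ≤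
        ENNReal.ofReal (1 / (((k : ℝ) + 2) * ((k : ℝ) + 1))) *
          ∑ i ∈ Finset.range (k + 2), ∑ j ∈ (Finset.range (k + 2)).filter (fun j => j ≠ i),
            ENNReal.ofReal |h (Z i ω, Z j ω)| := by
      intro ω
      have habs : |q k (W ω)| ≤ (1 / (((k : ℝ) + 2) * ((k : ℝ) + 1))) *
          ∑ i ∈ Finset.range (k + 2), ∑ j ∈ (Finset.range (k + 2)).filter (fun j => j ≠ i),
            |h (Z i ω, Z j ω)| := by
        rw [hqW k hk ω, abs_mul, abs_of_nonneg (by positivity : (0:ℝ) ≤ 1 / (((k : ℝ) + 2) * ((k : ℝ) + 1)))]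
        refine mul_le_mul_of_nonneg_left ?_ (by positivity)
        refine (Finset.abs_sum_le_sum_abs _ _).trans ?_
        exact Finset.sum_le_sum fun i _ => Finset.abs_sum_le_sum_abs _ _
      refine (ENNReal.ofReal_le_ofReal habs).trans (le_of_eq ?_)
      rw [ENNReal.ofReal_mul (by positivity)]
      congr 1
      rw [ENNReal.ofReal_sum_of_nonneg (fun i _ => Finset.sum_nonneg fun j _ => abs_nonneg _)]
      refine Finset.sum_congr rfl fun i _ => ?_
      rw [ENNReal.ofReal_sum_of_nonneg (fun j _ => abs_nonneg _)]
    have hmsum_i : ∀ i : ℕ, Measurable fun ω =>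
        ∑ j ∈ (Finset.range (k + 2)).filter (fun j => j ≠ i), ENNReal.ofReal |h (Z i ω, Z j ω)| :=
      fun i => Finset.measurable_sum _ fun j _ => hmeas_ij i j
    have step2 : ∫⁻ ω in A k, ENNReal.ofReal |q k (W ω)| ∂P ≤
        ENNReal.ofReal (1 / (((k : ℝ) + 2) * ((k : ℝ) + 1))) *
          ∑ i ∈ Finset.range (k + 2), ∑ j ∈ (Finset.range (k + 2)).filter (fun j => j ≠ i),
            ∫⁻ ω in A k, ENNReal.ofReal |h (Z i ω, Z j ω)| ∂P := by
      refine (lintegral_mono fun ω => ptwiseW ω).trans (le_of_eq ?_)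
      rw [lintegral_const_mul _ (Finset.measurable_sum _ fun i _ => hmsum_i i)]
      congr 1
      rw [lintegral_finset_sum _ (fun i _ => hmsum_i i)]
      refine Finset.sum_congr rfl fun i _ => ?_
      rw [lintegral_finset_sum _ (fun j _ => hmeas_ij i j)]
    have step3 : ∀ i j : ℕ, i < k + 2 → j < k + 2 → j ≠ i →
        ∫⁻ ω in A k, ENNReal.ofReal |h (Z i ω, Z j ω)| ∂P
          = ∫⁻ ω in A k, ENNReal.ofReal |h (Z 0 ω, Z 1 ω)| ∂P := by
      intro i j hi hj hij
      obtain ⟨e, he0, he1, hefix⟩ := exists_good_perm (n := N + 2) (by omega) hi hj hij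
      set G : Fin (N + 2) → Fin (N + 2) → (Fin (N + 2) → E) → ℝ≥0∞ := fun a b =>
        (B k).indicator (fun x => ENNReal.ofReal |h (x a, x b)|) with hG
      have hGm : ∀ a b, Measurable (G a b) := fun a b =>
        Measurable.indicator
          ((hh.comp ((measurable_pi_apply a).prodMk (measurable_pi_apply b))).abs.ennreal_ofReal)
          (hBm k)
      have htrans : ∀ (a b : ℕ), a < N + 2 → b < N + 2 →
          ∫⁻ ω in A k, ENNReal.ofReal |h (Z a ω, Z b ω)| ∂P
            = ∫⁻ x, G (a : Fin (N + 2)) (b : Fin (N + 2)) x ∂ν := by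
        intro a b ha hb
        rw [← hW, lintegral_map (hGm _ _) hWm, ← lintegral_indicator (hAm k)]
        refine lintegral_congr fun ω => ?_
        rw [hG]; dsimp only
        rw [Set.indicator_apply, Set.indicator_apply]
        have hZa : W ω ((a : ℕ) : Fin (N + 2)) = Z a ω := by
          rw [hWdef]; dsimp only; rw [Fin.val_cast_of_lt ha]
        have hZb : W ω ((b : ℕ) : Fin (N + 2)) = Z b ω := by
          rw [hWdef]; dsimp only; rw [Fin.val_cast_of_lt hb]
        refine if_congr (Iff.rfl) ?_ rfl
        rw [hZa, hZb]
      have mp : MeasurePreserving (fun (x : Fin (N + 2) → E) => fun i => x (e i)) ν ν := by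
        have h1 := (measurePreserving_piCongrLeft (fun _ : Fin (N + 2) => μ) e).symm
          (MeasurableEquiv.piCongrLeft (fun _ : Fin (N + 2) => E) e)
        have h2 : (fun (x : Fin (N + 2) → E) => fun i => x (e i))
            = ⇑(MeasurableEquiv.piCongrLeft (fun _ : Fin (N + 2) => E) e).symm := by
          funext x
          funext i
          rfl
        rw [hnu, h2]
        exact h1
      have hswap : ∫⁻ x, G ((i : ℕ) : Fin (N + 2)) ((j : ℕ) : Fin (N + 2)) x ∂ν
          = ∫⁻ x, G (((0 : ℕ) : ℕ) : Fin (N + 2)) (((1 : ℕ) : ℕ) : Fin (N + 2)) x ∂ν := by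
        have hcomp := mp.lintegral_comp (hGm (((0 : ℕ) : ℕ) : Fin (N + 2)) (((1 : ℕ) : ℕ) : Fin (N + 2)))
        rw [← hcomp]
        refine lintegral_congr fun x => ?_
        rw [hG]; dsimp only
        rw [Set.indicator_apply, Set.indicator_apply]
        have hmemiff : ((fun i => x (e i)) ∈ B k) ↔ (x ∈ B k) := by
          rw [hBmem, hBmem]
          have hq1 : ∀ l, k ≤ l → l ≤ N → q l (fun i => x (e i)) = q l x :=
            fun l h1 h2 => hqinv e k l hefix h1 h2 x
          constructor
          · rintro ⟨h1, h2⟩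
            refine ⟨by rw [← hq1 k le_rfl hk]; exact h1, fun l hl1 hl2 => ?_⟩
            rw [← hq1 l hl1.le hl2]; exact h2 l hl1 hl2
          · rintro ⟨h1, h2⟩
            refine ⟨by rw [hq1 k le_rfl hk]; exact h1, fun l hl1 hl2 => ?_⟩
            rw [hq1 l hl1.le hl2]; exact h2 l hl1 hl2
        refine if_congr hmemiff.symm (by simp only [he0, he1]) rfl
      rw [htrans i j (by omega) (by omega), htrans 0 1 (by omega) (by omega), hswap]
    -- assemble
    have hcard : ∀ i, i ∈ Finset.range (k + 2) →
        ((Finset.range (k + 2)).filter (fun j => j ≠ i)).card = k + 1 := by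
      intro i hi
      rw [Finset.filter_ne', Finset.card_erase_of_mem hi, Finset.card_range]
      omega
    have hsum : ∑ i ∈ Finset.range (k + 2), ∑ j ∈ (Finset.range (k + 2)).filter (fun j => j ≠ i),
        (∫⁻ ω in A k, ENNReal.ofReal |h (Z 0 ω, Z 1 ω)| ∂P)
        = (((k : ℝ≥0∞) + 2) * ((k : ℝ≥0∞) + 1)) *
            ∫⁻ ω in A k, ENNReal.ofReal |h (Z 0 ω, Z 1 ω)| ∂P := by
      rw [Finset.sum_congr rfl fun i hi => Finset.sum_const _]
      rw [Finset.sum_congr rfl fun i hi => by rw [hcard i hi]]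
      rw [Finset.sum_const, Finset.card_range]
      simp only [nsmul_eq_mul, Nat.cast_add, Nat.cast_ofNat, Nat.cast_one]
      ring
    have hcoeff : ENNReal.ofReal (1 / (((k : ℝ) + 2) * ((k : ℝ) + 1))) *
        (((k : ℝ≥0∞) + 2) * ((k : ℝ≥0∞) + 1)) = 1 := by
      have h1 : ((k : ℝ≥0∞) + 2) * ((k : ℝ≥0∞) + 1)
          = ENNReal.ofReal (((k : ℝ) + 2) * ((k : ℝ) + 1)) := by
        rw [ENNReal.ofReal_mul (by positivity), ENNReal.ofReal_add (by positivity) (by norm_num),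
          ENNReal.ofReal_add (by positivity) (by norm_num)]
        simp [ENNReal.ofReal_natCast]
      rw [h1, ← ENNReal.ofReal_mul (by positivity)]
      rw [one_div, inv_mul_cancel₀ (ne_of_gt hdpos)]
      exact ENNReal.ofReal_one
    calc ENNReal.ofReal c * P (A k)
        ≤ ∫⁻ ω in A k, ENNReal.ofReal |q k (W ω)| ∂P := step1
      _ ≤ ENNReal.ofReal (1 / (((k : ℝ) + 2) * ((k : ℝ) + 1))) *
          ∑ i ∈ Finset.range (k + 2), ∑ j ∈ (Finset.range (k + 2)).filter (fun j => j ≠ i),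
            ∫⁻ ω in A k, ENNReal.ofReal |h (Z i ω, Z j ω)| ∂P := step2
      _ = ENNReal.ofReal (1 / (((k : ℝ) + 2) * ((k : ℝ) + 1))) *
          ((((k : ℝ≥0∞) + 2) * ((k : ℝ≥0∞) + 1)) *
            ∫⁻ ω in A k, ENNReal.ofReal |h (Z 0 ω, Z 1 ω)| ∂P) := by
          rw [← hsum]
          congr 1
          refine Finset.sum_congr rfl fun i hi => Finset.sum_congr rfl fun j hj => ?_
          rw [Finset.mem_range] at hi
          rw [Finset.mem_filter, Finset.mem_range] at hj
          exact step3 i j hi hj.1 hj.2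
      _ = ∫⁻ ω in A k, ENNReal.ofReal |h (Z 0 ω, Z 1 ω)| ∂P := by
          rw [← mul_assoc, hcoeff, one_mul]
  -- disjointness
  have hAdisj : (↑(Finset.range (N + 1)) : Set ℕ).PairwiseDisjoint A := by
    have key2 : ∀ a b : ℕ, a < b → b ≤ N → Disjoint (A a) (A b) := by
      intro a b hab hbN
      rw [Set.disjoint_left]
      intro ω hωa hωb
      have h1 := ((hBmem a (W ω)).mp hωa).2 b hab hbN
      have h2 := ((hBmem b (W ω)).mp hωb).1
      linarith
    intro k1 hk1 k2 hk2 hne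
    rw [Finset.coe_range, Set.mem_Iio] at hk1 hk2
    rcases lt_or_gt_of_ne hne with hlt | hgt
    · exact key2 k1 k2 hlt (by omega)
    · exact (key2 k2 k1 hgt (by omega)).symm
  -- identify the union
  have hunion : (⋃ k ∈ Finset.range (N + 1), {ω | c ≤
      |(1 / (((k : ℝ) + 2) * ((k : ℝ) + 1))) *
        ∑ i ∈ Finset.range (k + 2),
          ∑ j ∈ (Finset.range (k + 2)).filter (fun j => j ≠ i),
            h (Z i ω, Z j ω)|}) = ⋃ k ∈ Finset.range (N + 1), A k := by
    ext ω
    simp only [Set.mem_iUnion, Finset.mem_range, Set.mem_setOf_eq]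
    constructor
    · rintro ⟨k0, hk0, hck0⟩
      have hP0 : c ≤ |q k0 (W ω)| := by rw [hqW k0 (by omega) ω]; exact hck0
      set k1 := Nat.findGreatest (fun k => c ≤ |q k (W ω)|) N with hk1def
      have hk1N : k1 ≤ N := Nat.findGreatest_le N
      have hPk1 : c ≤ |q k1 (W ω)| :=
        Nat.findGreatest_spec (P := fun k => c ≤ |q k (W ω)|) (n := N) (m := k0) (by omega) hP0
      refine ⟨k1, by omega, ?_⟩
      rw [hAmem, hBmem]
      refine ⟨hPk1, fun l hl1 hl2 => ?_⟩
      have hnP := Nat.findGreatest_is_greatest (P := fun k => c ≤ |q k (W ω)|)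
        (n := N) (by omega) hl2
      exact lt_of_not_ge hnP
    · rintro ⟨k, hkN, hωA⟩
      refine ⟨k, hkN, ?_⟩
      have h1 := ((hBmem k (W ω)).mp hωA).1
      rw [hqW k (by omega) ω] at h1
      exact h1
  rw [hunion]
  have hmain : ENNReal.ofReal c * P (⋃ k ∈ Finset.range (N + 1), A k)
      ≤ ENNReal.ofReal (∫ ω, |h (Z 0 ω, Z 1 ω)| ∂P) := by
    rw [measure_biUnion_finset hAdisj (fun k _ => hAm k), Finset.mul_sum]
    calc ∑ k ∈ Finset.range (N + 1), ENNReal.ofReal c * P (A k)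
        ≤ ∑ k ∈ Finset.range (N + 1), ∫⁻ ω in A k, ENNReal.ofReal |h (Z 0 ω, Z 1 ω)| ∂P :=
          Finset.sum_le_sum fun k hkr => hkey k (by rw [Finset.mem_range] at hkr; omega)
      _ = ∫⁻ ω in ⋃ k ∈ Finset.range (N + 1), A k, ENNReal.ofReal |h (Z 0 ω, Z 1 ω)| ∂P :=
          (lintegral_biUnion_finset hAdisj (fun k _ => hAm k) _).symm
      _ ≤ ∫⁻ ω, ENNReal.ofReal |h (Z 0 ω, Z 1 ω)| ∂P := setLIntegral_le_lintegral _ _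
      _ = ENNReal.ofReal (∫ ω, |h (Z 0 ω, Z 1 ω)| ∂P) :=
          (ofReal_integral_eq_lintegral_ofReal hint.abs
            (Filter.Eventually.of_forall fun ω => abs_nonneg _)).symm
  rw [ENNReal.ofReal_div_of_pos hc]
  rw [ENNReal.le_div_iff_mul_le (Or.inl (ENNReal.ofReal_pos.mpr hc).ne')
    (Or.inl ENNReal.ofReal_ne_top)]
  rw [mul_comm]
  exact hmain

/-- Maximal inequality for order-2 U-statistics of an i.i.d. sequence:
`ℙ(sup_{M ≥ 2} |U_M| ≥ δ) ≤ E|h(Z_1, Z_2)| / δ`, where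
`U_M = (1/(M(M-1))) ∑_{i ≠ j, i,j ∈ [M]} h(Z_i, Z_j)` (sum over ordered pairs).
Here the sequence is indexed from `0`, so `U_{M+2}` (for `M : ℕ`) realizes the
supremum over all ensemble sizes `≥ 2`, and `(Z_0, Z_1)` plays the role of
`(Z_1, Z_2)`. -/
theorem maximal_inequality_order_two_U_statistic
    {Ω E : Type*} [MeasurableSpace Ω] [MeasurableSpace E]
    (P : Measure Ω) [IsProbabilityMeasure P]
    (Z : ℕ → Ω → E) (hmeas : ∀ i, Measurable (Z i))
    (hindep : iIndepFun Z P)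
    (hident : ∀ i, IdentDistrib (Z i) (Z 0) P P)
    (h : E × E → ℝ) (hh : Measurable h)
    (hint : Integrable (fun ω => h (Z 0 ω, Z 1 ω)) P)
    (δ : ℝ) (hδ : 0 < δ) :
    P {ω | ENNReal.ofReal δ ≤
        ⨆ M : ℕ, ENNReal.ofReal
          |(1 / (((M : ℝ) + 2) * ((M : ℝ) + 1))) *
            ∑ i ∈ Finset.range (M + 2),
              ∑ j ∈ (Finset.range (M + 2)).filter (fun j => j ≠ i),
                h (Z i ω, Z j ω)|}
      ≤ ENNReal.ofReal ((∫ ω, |h (Z 0 ω, Z 1 ω)| ∂P) / δ) := by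
  classical
  set I : ℝ := ∫ ω, |h (Z 0 ω, Z 1 ω)| ∂P with hI
  set U : ℕ → Ω → ℝ := fun M ω =>
    (1 / (((M : ℝ) + 2) * ((M : ℝ) + 1))) *
      ∑ i ∈ Finset.range (M + 2),
        ∑ j ∈ (Finset.range (M + 2)).filter (fun j => j ≠ i),
          h (Z i ω, Z j ω) with hU
  have key : ∀ c : ℝ, 0 < c →
      P (⋃ M : ℕ, {ω | c ≤ |U M ω|}) ≤ ENNReal.ofReal (I / c) := by
    intro c hc
    have hmono : Monotone (fun N => ⋃ k ∈ Finset.range (N + 1), {ω | c ≤ |U k ω|}) := by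
      intro N₁ N₂ hN ω hω
      simp only [Set.mem_iUnion, Finset.mem_range] at hω ⊢
      obtain ⟨k, hk, hkc⟩ := hω
      exact ⟨k, by omega, hkc⟩
    have hcup : (⋃ M : ℕ, {ω | c ≤ |U M ω|})
        = ⋃ N, ⋃ k ∈ Finset.range (N + 1), {ω | c ≤ |U k ω|} := by
      ext ω
      simp only [Set.mem_iUnion, Finset.mem_range]
      constructor
      · rintro ⟨M, hM⟩; exact ⟨M, M, by omega, hM⟩
      · rintro ⟨N, k, _, hk⟩; exact ⟨k, hk⟩
    rw [hcup, Directed.measure_iUnion (hmono.directed_le)]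
    exact iSup_le fun N => U_stat_aux P Z hmeas hindep hident h hh hint c hc N
  have hsub : ∀ c : ℝ, 0 < c → c < δ →
      {ω | ENNReal.ofReal δ ≤ ⨆ M : ℕ, ENNReal.ofReal |U M ω|}
        ⊆ ⋃ M : ℕ, {ω | c ≤ |U M ω|} := by
    intro c hc hcδ ω hω
    simp only [Set.mem_setOf_eq] at hω
    have h1 : ENNReal.ofReal c < ⨆ M : ℕ, ENNReal.ofReal |U M ω| :=
      lt_of_lt_of_le ((ENNReal.ofReal_lt_ofReal_iff hδ).mpr hcδ) hω
    obtain ⟨M, hM⟩ := lt_iSup_iff.mp h1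
    have : c < |U M ω| := (ENNReal.ofReal_lt_ofReal_iff_of_nonneg hc.le).mp hM
    exact Set.mem_iUnion.mpr ⟨M, this.le⟩
  have hbound : ∀ c : ℝ, 0 < c → c < δ →
      P {ω | ENNReal.ofReal δ ≤ ⨆ M : ℕ, ENNReal.ofReal |U M ω|}
        ≤ ENNReal.ofReal (I / c) := by
    intro c hc hcδ
    exact le_trans (measure_mono (hsub c hc hcδ)) (key c hc)
  have htend : Filter.Tendsto (fun c : ℝ => ENNReal.ofReal (I / c))
      (nhdsWithin δ (Set.Iio δ)) (nhds (ENNReal.ofReal (I / δ))) := by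
    have hcont : ContinuousAt (fun c : ℝ => ENNReal.ofReal (I / c)) δ := by
      apply ENNReal.continuous_ofReal.continuousAt.comp
      exact (continuousAt_const.div continuousAt_id (ne_of_gt hδ))
    exact hcont.tendsto.mono_left nhdsWithin_le_nhds
  refine ge_of_tendsto htend ?_
  filter_upwards [Ioo_mem_nhdsLT hδ] with c hc
  exact hbound c hc.1 hc.2
end

section
/- Let K be a nonempty finite set, and let ζ ≥ 0 and δ > 0 be real numbers. Let b : K → ℝ and c : K → ℝ with c(k) ≥ 0 for all k ∈ K, and define the extrapolated risk estimate R̂ : {M ∈ ℕ : M ≥ 1} × K → ℝ by R̂(M, k) = b(k) + c(k)/M. Let R : {M ∈ ℕ : M ≥ 1} × K → ℝ be such that |R̂(M, k) − R(M, k)| ≤ ζ for all M ≥ 1 and k ∈ K. Suppose k̂ ∈ K minimizes b over K, and M̂ ≥ 1 satisfies c(k̂)/M̂ ≤ δ. Then R is bounded below, and R(M̂, k̂) ≤ inf_{M ≥ 1, k ∈ K} R(M, k) + δ + 2ζ. -/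
/-- Deterministic core of the δ-optimality guarantee of ECV: if the extrapolated
risk estimates `R̂(M, k) = b(k) + c(k)/M` are uniformly within `ζ` of the true risks
`R(M, k)`, `k̂` minimizes `b`, and `c(k̂)/M̂ ≤ δ`, then `R` is bounded below and the
selected ensemble's risk exceeds the oracle optimum by at most `δ + 2ζ`. -/
theorem ecv_additive_delta_optimality
    {K : Type*} [Fintype K] [Nonempty K]
    (ζ δ : ℝ) (hζ : 0 ≤ ζ) (hδ : 0 < δ)
    (b c : K → ℝ) (hc : ∀ k, 0 ≤ c k)
    (R : ℕ → K → ℝ)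
    (happrox : ∀ M : ℕ, 1 ≤ M → ∀ k : K, |(b k + c k / (M : ℝ)) - R M k| ≤ ζ)
    (khat : K) (hkhat : ∀ k, b khat ≤ b k)
    (Mhat : ℕ) (hMhat : 1 ≤ Mhat) (hMδ : c khat / (Mhat : ℝ) ≤ δ) :
    BddBelow (Set.range fun q : {M : ℕ // 1 ≤ M} × K => R q.1.1 q.2) ∧
    R Mhat khat ≤ (⨅ q : {M : ℕ // 1 ≤ M} × K, R q.1.1 q.2) + δ + 2 * ζ := by
  have hlb : ∀ q : {M : ℕ // 1 ≤ M} × K, b khat - ζ ≤ R q.1.1 q.2 := by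
    rintro ⟨⟨M, hM⟩, k⟩
    have h := abs_le.mp (happrox M hM k)
    have hcM : 0 ≤ c k / (M : ℝ) := div_nonneg (hc k) (Nat.cast_nonneg M)
    have := hkhat k
    simp only at h ⊢
    linarith [h.1, h.2]
  have hbdd : BddBelow (Set.range fun q : {M : ℕ // 1 ≤ M} × K => R q.1.1 q.2) := by
    refine ⟨b khat - ζ, ?_⟩
    rintro x ⟨q, rfl⟩
    exact hlb q
  refine ⟨hbdd, ?_⟩
  have hinf : b khat - ζ ≤ ⨅ q : {M : ℕ // 1 ≤ M} × K, R q.1.1 q.2 :=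
    le_ciInf hlb
  have h := abs_le.mp (happrox Mhat hMhat khat)
  linarith [h.1, h.2]
end
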